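/- arXiv:1605.00551 — 2 statements merged into one kernel-verified Lean document; each statement's English description precedes it below -/
import Mathlib

section
/- Let A: V¹ × V¹ → ℝ be a symmetric positive-definite bilinear form, and b: V¹ × V² → ℝ a bilinear form on finite-dimensional spaces satisfying the inf-sup condition: for every p ∈ V² there exists w ∈ V¹, w ≠ 0, with b(w,p) ≥ c‖w‖‖p‖ for a fixed c > 0. Then the saddle-point system A(v,w) + b(w,p) = F(w) for all w, b(v,q) = G(q) for all q, has a unique solution (v,p) ∈ V¹ × V² for any linear functionals F, G. -/
private lemma brezzi_ker {V1 V2 : Type*}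
    [NormedAddCommGroup V1] [InnerProductSpace ℝ V1]
    [NormedAddCommGroup V2] [InnerProductSpace ℝ V2]
    (A : V1 →ₗ[ℝ] V1 →ₗ[ℝ] ℝ)
    (hApos : ∀ v, v ≠ 0 → 0 < A v v)
    (b : V1 →ₗ[ℝ] V2 →ₗ[ℝ] ℝ)
    (c : ℝ) (hc : 0 < c)
    (hinfsup : ∀ p : V2, ∃ w : V1, w ≠ 0 ∧ b w p ≥ c * ‖w‖ * ‖p‖)
    (v : V1) (p : V2)
    (h1 : ∀ w : V1, A v w + b w p = 0) (h2 : ∀ q : V2, b v q = 0) :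
    v = 0 ∧ p = 0 := by
  have hv : v = 0 := by
    by_contra hv
    have := h1 v
    rw [h2 p] at this
    have := hApos v hv
    linarith
  subst hv
  refine ⟨rfl, ?_⟩
  by_contra hp
  obtain ⟨w, hw0, hwb⟩ := hinfsup p
  have hbw : b w p = 0 := by have := h1 w; simpa using this
  rw [hbw] at hwb
  have : 0 < c * ‖w‖ * ‖p‖ := by
    apply mul_pos (mul_pos hc _) _ <;> simpa [norm_pos_iff]
  linarith

/-- Finite-dimensional Brezzi theorem: a symmetric positive-definite form `A` together with an
inf-sup stable form `b` yields a uniquely solvable saddle-point system. -/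
theorem stmt_6
    {V1 V2 : Type*}
    [NormedAddCommGroup V1] [InnerProductSpace ℝ V1] [FiniteDimensional ℝ V1]
    [NormedAddCommGroup V2] [InnerProductSpace ℝ V2] [FiniteDimensional ℝ V2]
    (A : V1 →ₗ[ℝ] V1 →ₗ[ℝ] ℝ)
    (hAsymm : ∀ v w, A v w = A w v)
    (hApos : ∀ v, v ≠ 0 → 0 < A v v)
    (b : V1 →ₗ[ℝ] V2 →ₗ[ℝ] ℝ)
    (c : ℝ) (hc : 0 < c)
    (hinfsup : ∀ p : V2, ∃ w : V1, w ≠ 0 ∧ b w p ≥ c * ‖w‖ * ‖p‖)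
    (F : V1 →ₗ[ℝ] ℝ) (G : V2 →ₗ[ℝ] ℝ) :
    ∃! vp : V1 × V2,
      (∀ w : V1, A vp.1 w + b w vp.2 = F w) ∧ (∀ q : V2, b vp.1 q = G q) := by
  -- the saddle-point operator
  set T : (V1 × V2) →ₗ[ℝ] (V1 →ₗ[ℝ] ℝ) × (V2 →ₗ[ℝ] ℝ) :=
    LinearMap.prod
      (A.comp (LinearMap.fst ℝ V1 V2) + b.flip.comp (LinearMap.snd ℝ V1 V2))
      (b.comp (LinearMap.fst ℝ V1 V2)) with hT
  have hTapp : ∀ vp : V1 × V2,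
      T vp = (A vp.1 + b.flip vp.2, b vp.1) := fun vp => rfl
  have hinj : Function.Injective T := by
    rw [← LinearMap.ker_eq_bot, LinearMap.ker_eq_bot']
    rintro ⟨v, p⟩ hvp
    rw [hTapp] at hvp
    have h1 : ∀ w, A v w + b w p = 0 := fun w => by
      have := congrArg (fun f => f.1 w) hvp
      simpa using this
    have h2 : ∀ q, b v q = 0 := fun q => by
      have := congrArg (fun f => f.2 q) hvp
      simpa using this
    obtain ⟨hv, hp⟩ := brezzi_ker A hApos b c hc hinfsup v p h1 h2
    simp [hv, hp, Prod.ext_iff]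
  have hrank : Module.finrank ℝ (V1 × V2)
      = Module.finrank ℝ ((V1 →ₗ[ℝ] ℝ) × (V2 →ₗ[ℝ] ℝ)) := by
    simp [Module.finrank_prod, Module.finrank_linearMap]
  have hsurj : Function.Surjective T :=
    (LinearMap.injective_iff_surjective_of_finrank_eq_finrank hrank).mp hinj
  obtain ⟨vp, hvp⟩ := hsurj (F, G)
  refine ⟨vp, ?_, ?_⟩
  · rw [hTapp] at hvp
    constructor
    · intro w
      have := congrArg (fun f => f.1 w) hvp
      simpa using this
    · intro q
      have := congrArg (fun f => f.2 q) hvp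
      simpa using this
  · rintro ⟨v', p'⟩ ⟨h1', h2'⟩
    apply hinj
    rw [hvp, hTapp]
    ext x
    · simpa using h1' x
    · simpa using h2' x
end

section
/- Let q, D, F, u solve the discrete potential vorticity relation ∫ γ q D dx = -∫ ∇⊥γ·u dx + ∫ γ f dx for all γ ∈ V⁰ (a finite-dimensional space of H¹ functions vanishing on ∂Ω), together with the momentum equation tested with w = ∇⊥γ: ∫ ∇⊥γ·u_t dx + ∫ ∇⊥γ·F⊥ q dx = ∫ ∇·(∇⊥γ)(gD + |u|²/2) dx. Since ∇·∇⊥γ = 0, it follows that ∫ γ (qD)_t dx - ∫ ∇γ·(F q) dx = 0 for all γ ∈ V⁰. -/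
open MeasureTheory

lemma snd_deriv_symm {γ : (ℝ × ℝ) → ℝ} (hγ : ContDiff ℝ 2 γ) (x v w : ℝ × ℝ) :
    fderiv ℝ (fun y => fderiv ℝ γ y v) x w = fderiv ℝ (fun y => fderiv ℝ γ y w) x v := by
  have hd : DifferentiableAt ℝ (fderiv ℝ γ) x :=
    ((hγ.fderiv_right (m := 1) (by norm_num)).differentiable (by norm_num)).differentiableAt
  have hsymm := (hγ.contDiffAt (x := x)).isSymmSndFDerivAt (n := 2) (by simp [minSmoothness_of_isRCLikeNormedField])
  have key : ∀ a b : ℝ × ℝ, fderiv ℝ (fun y => fderiv ℝ γ y a) x b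
      = fderiv ℝ (fderiv ℝ γ) x b a := by
    intro a b
    have := fderiv_clm_apply (c := fderiv ℝ γ) (u := fun _ => a) hd
      (differentiableAt_const a)
    rw [show (fun y => fderiv ℝ γ y a) = (fun y => (fderiv ℝ γ y) ((fun _ : ℝ × ℝ => a) y)) from rfl,
      this]
    simp
  rw [key, key, hsymm]

/-- Discrete potential vorticity conservation for the compatible finite element shallow
water scheme: from the PV relation, the momentum equation tested with `w = ∇⊥γ`, and
`∇·∇⊥γ = 0`, it follows that `∫ γ (qD)_t - ∫ ∇γ·(Fq) = 0` for all `γ ∈ V⁰`. -/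
theorem stmt_9
    (Ω : Set (ℝ × ℝ)) (hΩ : MeasurableSet Ω)
    (V0 : Set ((ℝ × ℝ) → ℝ))
    (hV0 : ∀ γ ∈ V0, ContDiff ℝ 2 γ)
    (fcor : (ℝ × ℝ) → ℝ) (gconst : ℝ) (hg : 0 < gconst)
    -- time-dependent fields: potential vorticity, depth, velocity and mass flux,
    -- together with the fields representing `u_t` and `(qD)_t`
    (q D : ℝ → (ℝ × ℝ) → ℝ) (u F : ℝ → (ℝ × ℝ) → ℝ × ℝ)
    (ut : ℝ → (ℝ × ℝ) → ℝ × ℝ) (qDt : ℝ → (ℝ × ℝ) → ℝ)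
    -- the discrete PV relation  ∫ γ qD = -∫ ∇⊥γ·u + ∫ γ f
    (hPV : ∀ γ ∈ V0, ∀ t : ℝ,
      ∫ x in Ω, γ x * (q t x * D t x)
        = -(∫ x in Ω, ((-(fderiv ℝ γ x (0, 1))) * (u t x).1
              + (fderiv ℝ γ x (1, 0)) * (u t x).2))
          + ∫ x in Ω, γ x * fcor x)
    -- `(qD)_t` and `u_t` are the time derivatives of the corresponding integrals
    (hdqD : ∀ γ ∈ V0, ∀ t : ℝ,
      HasDerivAt (fun s => ∫ x in Ω, γ x * (q s x * D s x))
        (∫ x in Ω, γ x * qDt t x) t)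
    (hdu : ∀ γ ∈ V0, ∀ t : ℝ,
      HasDerivAt (fun s => ∫ x in Ω, ((-(fderiv ℝ γ x (0, 1))) * (u s x).1
          + (fderiv ℝ γ x (1, 0)) * (u s x).2))
        (∫ x in Ω, ((-(fderiv ℝ γ x (0, 1))) * (ut t x).1
          + (fderiv ℝ γ x (1, 0)) * (ut t x).2)) t)
    -- the momentum equation tested with `w = ∇⊥γ`:
    -- ∫ ∇⊥γ·u_t + ∫ (∇⊥γ·F⊥) q = ∫ ∇·(∇⊥γ) (gD + |u|²/2)
    (hmom : ∀ γ ∈ V0, ∀ t : ℝ,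
      (∫ x in Ω, ((-(fderiv ℝ γ x (0, 1))) * (ut t x).1
          + (fderiv ℝ γ x (1, 0)) * (ut t x).2))
        + (∫ x in Ω, ((-(fderiv ℝ γ x (0, 1))) * (-(F t x).2)
            + (fderiv ℝ γ x (1, 0)) * (F t x).1) * q t x)
        = ∫ x in Ω,
            (fderiv ℝ (fun y => -(fderiv ℝ γ y (0, 1))) x (1, 0)
              + fderiv ℝ (fun y => fderiv ℝ γ y (1, 0)) x (0, 1))
            * (gconst * D t x + ‖u t x‖ ^ 2 / 2)) :
    ∀ γ ∈ V0, ∀ t : ℝ,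
      (∫ x in Ω, γ x * qDt t x)
        - (∫ x in Ω, ((fderiv ℝ γ x (1, 0)) * ((F t x).1 * q t x)
            + (fderiv ℝ γ x (0, 1)) * ((F t x).2 * q t x))) = 0 := by
  intro γ hγ t
  have hγ2 := hV0 γ hγ
  -- Step 1: the divergence of ∇⊥γ vanishes
  have hdiv : ∀ x : ℝ × ℝ,
      fderiv ℝ (fun y => -(fderiv ℝ γ y (0, 1))) x (1, 0)
        + fderiv ℝ (fun y => fderiv ℝ γ y (1, 0)) x (0, 1) = 0 := by
    intro x
    have hneg : fderiv ℝ (fun y => -(fderiv ℝ γ y (0, 1))) x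
        = -(fderiv ℝ (fun y => fderiv ℝ γ y (0, 1)) x) := fderiv_neg
    rw [hneg]
    simp [snd_deriv_symm hγ2 x (0,1) (1,0)]
  -- hence the RHS of the momentum equation vanishes
  have hrhs0 : (∫ x in Ω,
      (fderiv ℝ (fun y => -(fderiv ℝ γ y (0, 1))) x (1, 0)
        + fderiv ℝ (fun y => fderiv ℝ γ y (1, 0)) x (0, 1))
      * (gconst * D t x + ‖u t x‖ ^ 2 / 2)) = 0 := by
    have : ∀ x : ℝ × ℝ,
        (fderiv ℝ (fun y => -(fderiv ℝ γ y (0, 1))) x (1, 0)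
          + fderiv ℝ (fun y => fderiv ℝ γ y (1, 0)) x (0, 1))
        * (gconst * D t x + ‖u t x‖ ^ 2 / 2) = 0 := by
      intro x; rw [hdiv x]; ring
    simp only [this, integral_zero]
  -- Step 2: differentiate the PV relation in time
  have hfun : (fun s => ∫ x in Ω, γ x * (q s x * D s x))
      = fun s => -(∫ x in Ω, ((-(fderiv ℝ γ x (0, 1))) * (u s x).1
          + (fderiv ℝ γ x (1, 0)) * (u s x).2)) + ∫ x in Ω, γ x * fcor x :=
    funext (hPV γ hγ)
  have h1 : HasDerivAt (fun s => ∫ x in Ω, γ x * (q s x * D s x))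
      (-(∫ x in Ω, ((-(fderiv ℝ γ x (0, 1))) * (ut t x).1
          + (fderiv ℝ γ x (1, 0)) * (ut t x).2))) t := by
    rw [hfun]
    exact ((hdu γ hγ t).neg).add_const _
  have h2 : (∫ x in Ω, γ x * qDt t x)
      = -(∫ x in Ω, ((-(fderiv ℝ γ x (0, 1))) * (ut t x).1
          + (fderiv ℝ γ x (1, 0)) * (ut t x).2)) :=
    (hdqD γ hγ t).unique h1
  -- Step 3: combine with the momentum equation
  have h3 := hmom γ hγ t
  rw [hrhs0] at h3
  have h4 : (∫ x in Ω, γ x * qDt t x)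
      = ∫ x in Ω, ((-(fderiv ℝ γ x (0, 1))) * (-(F t x).2)
          + (fderiv ℝ γ x (1, 0)) * (F t x).1) * q t x := by
    rw [h2]; linarith
  -- Step 4: rewrite the integrand as ∇γ·(Fq)
  have h5 : (fun x => ((-(fderiv ℝ γ x (0, 1))) * (-(F t x).2)
        + (fderiv ℝ γ x (1, 0)) * (F t x).1) * q t x)
      = fun x => ((fderiv ℝ γ x (1, 0)) * ((F t x).1 * q t x)
        + (fderiv ℝ γ x (0, 1)) * ((F t x).2 * q t x)) := by
    funext x; ring
  rw [h4, h5, sub_self]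
end
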